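/- Let {a_n} be a sequence of real numbers in (0,1] with a_n → 0 and ∑ a_n = ∞. Then for all real numbers 0 ≤ α < β ≤ 1, there exist a positive integer N and indices n_1, ..., n_N such that the product ∏_{i=1}^N (1 - a_{n_i}) lies strictly between α and β. -/
import Mathlib


open Filter

theorem stmt9 (a : ℕ → ℝ) (ha : ∀ n, a n ∈ Set.Ioc (0 : ℝ) 1)
    (hlim : Tendsto a atTop (nhds 0)) (hdiv : ¬ Summable a)
    (α β : ℝ) (hα : 0 ≤ α) (hαβ : α < β) (hβ : β ≤ 1) :
    ∃ (N : ℕ) (_ : 0 < N) (idx : Fin N → ℕ),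
      (∏ i : Fin N, (1 - a (idx i))) ∈ Set.Ioo α β := by
  have hβ0 : 0 < β := lt_of_le_of_lt hα hαβ
  set c : ℝ := max (α / β) (1 / 2) with hc
  have hc1 : c < 1 := by
    apply max_lt _ (by norm_num)
    rw [div_lt_one hβ0]; exact hαβ
  have hc0 : 0 < c := lt_of_lt_of_le (by norm_num) (le_max_right _ _)
  have hαc : α ≤ c := by
    refine le_trans ?_ (le_max_left _ _)
    rw [le_div_iff₀ hβ0]
    calc α * β ≤ α * 1 := mul_le_mul_of_nonneg_left hβ hα
    _ = α := mul_one α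
  have hαβc : α / β ≤ c := le_max_left _ _
  -- find K such that a n < 1 - c for n ≥ K
  have hev : ∀ᶠ n in atTop, a n < 1 - c := hlim.eventually_lt_const (by linarith)
  obtain ⟨K, hK⟩ := eventually_atTop.mp hev
  have hfac : ∀ i : ℕ, c < 1 - a (K + i) := by
    intro i
    have := hK (K + i) (Nat.le_add_right _ _)
    linarith
  set P : ℕ → ℝ := fun m => ∏ i ∈ Finset.range (m + 1), (1 - a (K + i)) with hP
  have hPpos : ∀ m, 0 < P m := by
    intro m
    exact Finset.prod_pos (fun i _ => lt_trans hc0 (hfac i))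
  -- P m ≤ exp (-(sum))
  have hPle : ∀ m, P m ≤ Real.exp (-(∑ i ∈ Finset.range (m + 1), a (K + i))) := by
    intro m
    rw [show -(∑ i ∈ Finset.range (m + 1), a (K + i))
        = ∑ i ∈ Finset.range (m + 1), (-(a (K + i))) by rw [← Finset.sum_neg_distrib],
      Real.exp_sum]
    refine Finset.prod_le_prod (fun i _ => le_of_lt (lt_trans hc0 (hfac i))) ?_
    intro i _
    have := Real.add_one_le_exp (-(a (K + i)))
    linarith
  -- partial sums of the shifted sequence tend to infinity
  have hnots : ¬ Summable (fun i => a (K + i)) := by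
    intro hs
    apply hdiv
    have hs' : Summable (fun i => a (i + K)) := by
      simpa [add_comm] using hs
    exact (summable_nat_add_iff K).mp hs'
  have hS : Tendsto (fun m => ∑ i ∈ Finset.range m, a (K + i)) atTop atTop := by
    have := (not_summable_iff_tendsto_nat_atTop_of_nonneg
      (fun i => le_of_lt (ha (K + i)).1)).mp hnots
    exact this
  have hexp : Tendsto (fun m => Real.exp (-(∑ i ∈ Finset.range (m + 1), a (K + i))))
      atTop (nhds 0) := by
    have h1 : Tendsto (fun m => ∑ i ∈ Finset.range (m + 1), a (K + i)) atTop atTop :=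
      hS.comp (tendsto_add_atTop_nat 1)
    exact Real.tendsto_exp_neg_atTop_nhds_zero.comp h1
  have hexists : ∃ m, P m < β := by
    have := (hexp.eventually_lt_const hβ0).exists
    obtain ⟨m, hm⟩ := this
    exact ⟨m, lt_of_le_of_lt (hPle m) hm⟩
  classical
  let m := Nat.find hexists
  have hm : P m < β := Nat.find_spec hexists
  have hmα : α < P m := by
    rcases Nat.eq_zero_or_pos m with h0 | hpos
    · have : P m = 1 - a (K + 0) := by
        rw [h0]; simp [hP]
      rw [this]
      exact lt_of_le_of_lt hαc (hfac 0)
    · obtain ⟨m', hm'⟩ := Nat.exists_eq_succ_of_ne_zero (Nat.pos_iff_ne_zero.mp hpos)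
      have hprev : ¬ P m' < β := Nat.find_min hexists (by omega)
      push_neg at hprev
      have hsucc : P m = P m' * (1 - a (K + (m' + 1))) := by
        rw [hm', hP]
        exact Finset.prod_range_succ _ _
      rw [hsucc]
      calc α = β * (α / β) := by field_simp
      _ < β * (1 - a (K + (m' + 1))) := by
          exact mul_lt_mul_of_pos_left (lt_of_le_of_lt hαβc (hfac _)) hβ0
      _ ≤ P m' * (1 - a (K + (m' + 1))) := by
          refine mul_le_mul_of_nonneg_right hprev ?_
          exact le_of_lt (lt_trans hc0 (hfac _))
  refine ⟨m + 1, Nat.succ_pos m, fun i => K + i.val, ?_⟩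
  have : (∏ i : Fin (m + 1), (1 - a (K + i.val))) = P m := by
    rw [hP]
    exact Fin.prod_univ_eq_prod_range (fun i => 1 - a (K + i)) (m + 1)
  rw [this]
  exact ⟨hmα, hm⟩
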